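/- Let E be a real inner product space, let k ≥ 1 and M ≥ 1 be natural numbers, let x̂_1, …, x̂_k ∈ E be waypoints, let o_1, …, o_M ∈ E be obstacle centers with clearance radii l_1, …, l_M ≥ 0, let g ∈ E be a goal point, let ρ > 0, let 0 < η < η', and let Δx > 0. Suppose: (i) ‖x̂_{j+1} − x̂_j‖ ≤ Δx for every j ∈ {1, …, k−1}; (ii) ‖x̂_j − o_h‖ ≥ l_h + η' for every j ∈ {1, …, k} and every h ∈ {1, …, M}; (iii) ‖x̂_k − g‖ ≤ Δx; and (iv) Δx < min(ρ − η, min over h of 2·√((η' − η)² + 2·(l_h + η)·(η' − η))). Then: (a) for every x ∈ E, every j ∈ {1, …, k−1}, and every t ∈ [0,1], if ‖x − ((1 − t) • x̂_j + t • x̂_{j+1})‖ ≤ η then ‖x − o_h‖ > l_h for all h ∈ {1, …, M}; and (b) every x ∈ E with ‖x − x̂_k‖ ≤ η satisfies ‖x − g‖ < ρ, i.e., x lies in the open ball of radius ρ around g. -/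

import Mathlib

lemma seg_norm_sq {E : Type*} [NormedAddCommGroup E] [InnerProductSpace ℝ E]
    (u v : E) (t : ℝ) :
    ‖(1 - t) • u + t • v‖ ^ 2
      = (1 - t) * ‖u‖ ^ 2 + t * ‖v‖ ^ 2 - t * (1 - t) * ‖v - u‖ ^ 2 := by
  have h : ∀ w : E, ‖w‖ ^ 2 = inner ℝ w w := fun w =>
    (real_inner_self_eq_norm_sq w).symm
  rw [h, h, h, h]
  simp only [inner_add_add_self, inner_sub_sub_self, inner_smul_left,
    inner_smul_right, RCLike.conj_to_real, real_inner_comm u v]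
  ring

set_option maxHeartbeats 1000000 in
/-- Geometric content of the paper's Theorem: a planner with step size
`Δx < min(ρ − η, min_h 2·√((η' − η)² + 2·(l h + η)·(η' − η)))`, planning through
states farther than `l h + η'` from every obstacle center and ending within `Δx`
of the goal `g`, yields (a) any trajectory tracking the polyline with error at
most `η` avoids every true clearance region of radius `l h`, and (b) the tracked
endpoint lies in the open ball of radius `ρ` around `g`. -/
theorem tracked_polyline_safe_and_reaches_goal
    {E : Type*} [NormedAddCommGroup E] [InnerProductSpace ℝ E]
    (k M : ℕ) (hk : 1 ≤ k) (hM : 1 ≤ M)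
    (xh : Fin k → E) (o : Fin M → E) (l : Fin M → ℝ) (hl : ∀ h, 0 ≤ l h)
    (g : E) (ρ η η' Δx : ℝ) (hρ : 0 < ρ) (hη : 0 < η) (hηη' : η < η') (hΔx : 0 < Δx)
    (hstep : ∀ (j : ℕ) (hj : j + 1 < k),
      ‖xh ⟨j + 1, hj⟩ - xh ⟨j, Nat.lt_of_succ_lt hj⟩‖ ≤ Δx)
    (hclear : ∀ (j : Fin k) (h : Fin M), l h + η' ≤ ‖xh j - o h‖)
    (hgoal : ‖xh ⟨k - 1, Nat.sub_lt hk Nat.one_pos⟩ - g‖ ≤ Δx)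
    (hbound : Δx < min (ρ - η)
      (Finset.univ.inf' (Finset.univ_nonempty_iff.mpr ⟨⟨0, hM⟩⟩)
        (fun h : Fin M =>
          2 * Real.sqrt ((η' - η) ^ 2 + 2 * (l h + η) * (η' - η))))) :
    (∀ (x : E) (j : ℕ) (hj : j + 1 < k) (t : ℝ), t ∈ Set.Icc (0 : ℝ) 1 →
      ‖x - ((1 - t) • xh ⟨j, Nat.lt_of_succ_lt hj⟩ + t • xh ⟨j + 1, hj⟩)‖ ≤ η →
      ∀ h : Fin M, l h < ‖x - o h‖) ∧
    (∀ x : E, ‖x - xh ⟨k - 1, Nat.sub_lt hk Nat.one_pos⟩‖ ≤ η → ‖x - g‖ < ρ) := by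
  constructor
  · intro x j hj t ht hx h
    obtain ⟨ht0, ht1⟩ := ht
    set a := xh ⟨j, Nat.lt_of_succ_lt hj⟩ with ha_def
    set b := xh ⟨j + 1, hj⟩ with hb_def
    set p := (1 - t) • a + t • b with hp_def
    have hmin : Δx < 2 * Real.sqrt ((η' - η) ^ 2 + 2 * (l h + η) * (η' - η)) :=
      lt_of_lt_of_le (lt_of_lt_of_le hbound (min_le_right _ _))
        (Finset.inf'_le _ (Finset.mem_univ h))
    have hpo : p - o h = (1 - t) • (a - o h) + t • (b - o h) := by
      rw [hp_def]; module
    have hkey : ‖p - o h‖ ^ 2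
        = (1 - t) * ‖a - o h‖ ^ 2 + t * ‖b - o h‖ ^ 2
          - t * (1 - t) * ‖b - a‖ ^ 2 := by
      rw [hpo, seg_norm_sq]
      congr 2
      abel
    have ha : l h + η' ≤ ‖a - o h‖ := hclear ⟨j, Nat.lt_of_succ_lt hj⟩ h
    have hb : l h + η' ≤ ‖b - o h‖ := hclear ⟨j + 1, hj⟩ h
    have hba : ‖b - a‖ ≤ Δx := hstep j hj
    have htri : ‖p - o h‖ ≤ ‖p - x‖ + ‖x - o h‖ :=
      norm_sub_le_norm_sub_add_norm_sub p x (o h)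
    have hxp : ‖p - x‖ ≤ η := by rw [norm_sub_rev]; exact hx
    -- abstract everything to real variables
    set L := l h with hL_def
    set A := ‖a - o h‖ with hA_def
    set B := ‖b - o h‖ with hB_def
    set C := ‖b - a‖ with hC_def
    set D := ‖p - o h‖ with hD_def
    set P := ‖p - x‖ with hP_def
    set X := ‖x - o h‖ with hX_def
    have hA0 : 0 ≤ A := norm_nonneg _
    have hB0 : 0 ≤ B := norm_nonneg _
    have hC0 : 0 ≤ C := norm_nonneg _
    have hD0 : 0 ≤ D := norm_nonneg _
    have hP0 : 0 ≤ P := norm_nonneg _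
    have hX0 : 0 ≤ X := norm_nonneg _
    have hL0 : 0 ≤ L := hl h
    clear_value L A B C D P X
    clear ha_def hA_def hB_def hC_def hD_def hP_def hX_def hL_def hb_def hp_def
      hpo hx hbound hclear hstep hgoal xh x p a b o hl g hj hρ hM hk
    -- pure real arithmetic from here
    show L < X
    have hexpr : (0:ℝ) ≤ (η' - η) ^ 2 + 2 * (L + η) * (η' - η) := by nlinarith
    have hs := Real.sq_sqrt hexpr
    have hΔsq : Δx ^ 2 / 4 < (η' - η) ^ 2 + 2 * (L + η) * (η' - η) := by
      nlinarith [Real.sqrt_nonneg ((η' - η) ^ 2 + 2 * (L + η) * (η' - η))]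
    have hRnn : (0:ℝ) ≤ L + η' := by linarith
    have ha2 : (L + η') ^ 2 ≤ A ^ 2 := by nlinarith
    have hb2 : (L + η') ^ 2 ≤ B ^ 2 := by nlinarith
    have hba2 : C ^ 2 ≤ Δx ^ 2 := by nlinarith
    have ht14 : t * (1 - t) ≤ 1 / 4 := by nlinarith [sq_nonneg (2 * t - 1)]
    have ht01 : (0:ℝ) ≤ t * (1 - t) := mul_nonneg ht0 (by linarith)
    have hprod : t * (1 - t) * C ^ 2 ≤ Δx ^ 2 / 4 := by
      nlinarith [mul_nonneg ht01 (sq_nonneg C)]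
    have hconv : (L + η') ^ 2 ≤ (1 - t) * A ^ 2 + t * B ^ 2 := by nlinarith
    have hpdist : (L + η) ^ 2 < D ^ 2 := by nlinarith
    have hpgt : L + η < D := by nlinarith
    linarith
  · intro x hx
    have h1 : Δx < ρ - η := lt_of_lt_of_le hbound (min_le_left _ _)
    calc ‖x - g‖ ≤ ‖x - xh ⟨k - 1, Nat.sub_lt hk Nat.one_pos⟩‖
          + ‖xh ⟨k - 1, Nat.sub_lt hk Nat.one_pos⟩ - g‖ :=
        norm_sub_le_norm_sub_add_norm_sub _ _ _
      _ < ρ := by linarith
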